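/- arXiv:1912.00516 — 2 statements merged into one kernel-verified Lean document; each statement's English description precedes it below -/
import Mathlib

section
/- If a (theta, wheel)-free graph G has a star cutset, then G has a clique cutset. -/
open SimpleGraph

universe u

variable {V : Type u}

/-- A hole: a chordless cycle of length at least 4. -/
def IsHole (G : SimpleGraph V) {v : V} (c : G.Walk v v) : Prop :=
  c.IsCycle ∧ 4 ≤ c.length ∧
    ∀ x ∈ c.support, ∀ y ∈ c.support, G.Adj x y → s(x, y) ∈ c.edges

/-- There is a hole of `G` passing through both `u` and `v`. -/
def HasHoleThrough (G : SimpleGraph V) (u v : V) : Prop :=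
  ∃ (w : V) (c : G.Walk w w), IsHole G c ∧ u ∈ c.support ∧ v ∈ c.support

/-- `G` contains a theta as an induced subgraph: three internally vertex-disjoint
paths of length at least 2 between two distinct vertices, with no further edges
among the vertices of the three paths. -/
def ContainsTheta (G : SimpleGraph V) : Prop :=
  ∃ (a b : V) (P₁ P₂ P₃ : G.Walk a b),
    a ≠ b ∧ P₁.IsPath ∧ P₂.IsPath ∧ P₃.IsPath ∧
    2 ≤ P₁.length ∧ 2 ≤ P₂.length ∧ 2 ≤ P₃.length ∧
    (∀ x ∈ P₁.support, x ∈ P₂.support → x = a ∨ x = b) ∧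
    (∀ x ∈ P₁.support, x ∈ P₃.support → x = a ∨ x = b) ∧
    (∀ x ∈ P₂.support, x ∈ P₃.support → x = a ∨ x = b) ∧
    (∀ x y : V, (x ∈ P₁.support ∨ x ∈ P₂.support ∨ x ∈ P₃.support) →
      (y ∈ P₁.support ∨ y ∈ P₂.support ∨ y ∈ P₃.support) → G.Adj x y →
      s(x, y) ∈ P₁.edges ∨ s(x, y) ∈ P₂.edges ∨ s(x, y) ∈ P₃.edges)

/-- `G` contains a wheel as an induced subgraph: a hole together with a vertex
having at least 3 neighbors on the hole. -/
def ContainsWheel (G : SimpleGraph V) : Prop :=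
  ∃ (w : V) (c : G.Walk w w) (x y₁ y₂ y₃ : V),
    IsHole G c ∧ x ∉ c.support ∧
    y₁ ∈ c.support ∧ y₂ ∈ c.support ∧ y₃ ∈ c.support ∧
    y₁ ≠ y₂ ∧ y₁ ≠ y₃ ∧ y₂ ≠ y₃ ∧ G.Adj x y₁ ∧ G.Adj x y₂ ∧ G.Adj x y₃

/-- `G` contains a diamond (K₄ minus an edge) as an induced subgraph. -/
def ContainsDiamond (G : SimpleGraph V) : Prop :=
  ∃ a b c d : V, a ≠ b ∧ a ≠ c ∧ a ≠ d ∧ b ≠ c ∧ b ≠ d ∧ c ≠ d ∧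
    ¬ G.Adj a b ∧ G.Adj a c ∧ G.Adj a d ∧ G.Adj b c ∧ G.Adj b d ∧ G.Adj c d

/-- `G` contains a claw (K_{1,3}) as an induced subgraph. -/
def ContainsClaw (G : SimpleGraph V) : Prop :=
  ∃ u v₁ v₂ v₃ : V, v₁ ≠ v₂ ∧ v₁ ≠ v₃ ∧ v₂ ≠ v₃ ∧
    G.Adj u v₁ ∧ G.Adj u v₂ ∧ G.Adj u v₃ ∧
    ¬ G.Adj v₁ v₂ ∧ ¬ G.Adj v₁ v₃ ∧ ¬ G.Adj v₂ v₃

/-- `(A, K, B)` is a split witnessing that `K` is a cutset of `G`: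
`A` and `B` are nonempty, the three sets partition the vertex set,
and there are no edges between `A` and `B`. -/
def IsCutsetSplit (G : SimpleGraph V) (A K B : Set V) : Prop :=
  A.Nonempty ∧ B.Nonempty ∧ Disjoint A K ∧ Disjoint A B ∧ Disjoint K B ∧
    A ∪ K ∪ B = Set.univ ∧ ∀ a ∈ A, ∀ b ∈ B, ¬ G.Adj a b

/-- `G` has a clique cutset. -/
def HasCliqueCutset (G : SimpleGraph V) : Prop :=
  ∃ K A B : Set V, G.IsClique K ∧ IsCutsetSplit G A K B

/-- Some clique cutset of `G` separates `u` and `v`. -/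
def CliqueCutsetSeparates (G : SimpleGraph V) (u v : V) : Prop :=
  ∃ K A B : Set V, G.IsClique K ∧ IsCutsetSplit G A K B ∧ u ∈ A ∧ v ∈ B

/-- `G` has a star cutset: a nonempty cutset containing a vertex adjacent to
all other vertices of the cutset. -/
def HasStarCutset (G : SimpleGraph V) : Prop :=
  ∃ S A B : Set V, S.Nonempty ∧ IsCutsetSplit G A S B ∧
    ∃ x ∈ S, ∀ y ∈ S, y ≠ x → G.Adj x y

/-- `u` and `v` are joined by a walk all of whose vertices lie in `X`. -/
def ReachableWithin (G : SimpleGraph V) (X : Set V) (u v : V) : Prop :=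
  ∃ p : G.Walk u v, ∀ x ∈ p.support, x ∈ X

/-- `C` is a connected component of the subgraph of `G` induced by `X`. -/
def IsCompOf (G : SimpleGraph V) (X C : Set V) : Prop :=
  C.Nonempty ∧ C ⊆ X ∧ (∀ u ∈ C, ∀ v ∈ C, ReachableWithin G X u v) ∧
    ∀ u ∈ C, ∀ v ∈ X, G.Adj u v → v ∈ C

/-- The subgraph of `G` induced by `A` is a disjoint union of cliques. -/
def UnionOfCliques (G : SimpleGraph V) (A : Set V) : Prop :=
  ∀ x ∈ A, ∀ y ∈ A, ∀ z ∈ A, G.Adj x y → G.Adj y z → x ≠ z → G.Adj x z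

/-- `(X₁, X₂, A₁, A₂, B₁, B₂)` is a split of an almost 2-join of `G`. -/
def AlmostTwoJoinSplit (G : SimpleGraph V) (X₁ X₂ A₁ A₂ B₁ B₂ : Set V) : Prop :=
  Disjoint X₁ X₂ ∧ X₁ ∪ X₂ = Set.univ ∧ 3 ≤ X₁.ncard ∧ 3 ≤ X₂.ncard ∧
  A₁.Nonempty ∧ B₁.Nonempty ∧ A₂.Nonempty ∧ B₂.Nonempty ∧
  A₁ ⊆ X₁ ∧ B₁ ⊆ X₁ ∧ A₂ ⊆ X₂ ∧ B₂ ⊆ X₂ ∧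
  Disjoint A₁ B₁ ∧ Disjoint A₂ B₂ ∧
  (∀ a ∈ A₁, ∀ b ∈ A₂, G.Adj a b) ∧
  (∀ a ∈ B₁, ∀ b ∈ B₂, G.Adj a b) ∧
  (∀ x ∈ X₁, ∀ y ∈ X₂, G.Adj x y → (x ∈ A₁ ∧ y ∈ A₂) ∨ (x ∈ B₁ ∧ y ∈ B₂))

/-- The subgraph of `G` induced by `X` is a chordless path. -/
def InducesPath (G : SimpleGraph V) (X : Set V) : Prop :=
  ∃ (u v : V) (p : G.Walk u v), p.IsPath ∧ (∀ x : V, x ∈ p.support ↔ x ∈ X) ∧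
    ∀ x ∈ X, ∀ y ∈ X, G.Adj x y → s(x, y) ∈ p.edges

/-- `(X₁, X₂, A₁, A₂, B₁, B₂)` is a split of a 2-join of `G`. -/
def TwoJoinSplit (G : SimpleGraph V) (X₁ X₂ A₁ A₂ B₁ B₂ : Set V) : Prop :=
  AlmostTwoJoinSplit G X₁ X₂ A₁ A₂ B₁ B₂ ∧
  (∃ a ∈ A₁, ∃ b ∈ B₁, ReachableWithin G X₁ a b) ∧
  (∃ a ∈ A₂, ∃ b ∈ B₂, ReachableWithin G X₂ a b) ∧
  (A₁.ncard = 1 → B₁.ncard = 1 → ¬ InducesPath G X₁) ∧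
  (A₂.ncard = 1 → B₂.ncard = 1 → ¬ InducesPath G X₂)

/-- `(X₁, X₂, A₁, A₂, B₁, B₂)` is a split of a minimally-sided 2-join of `G`,
with `X₁` a minimal side. -/
def MinimallySidedTwoJoin (G : SimpleGraph V) (X₁ X₂ A₁ A₂ B₁ B₂ : Set V) : Prop :=
  TwoJoinSplit G X₁ X₂ A₁ A₂ B₁ B₂ ∧
  ∀ Y₁ Y₂ C₁ C₂ D₁ D₂ : Set V, TwoJoinSplit G Y₁ Y₂ C₁ C₂ D₁ D₂ →
    ¬ Y₁ ⊂ X₁ ∧ ¬ Y₂ ⊂ X₁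

/-- Conditions (i)–(iii) and (vi)–(viii) of consistency of an almost 2-join,
for the side `X` with special sets `A` and `B`. -/
def ConsistentSide (G : SimpleGraph V) (X A B : Set V) : Prop :=
  (∀ C : Set V, IsCompOf G X C → (C ∩ A).Nonempty ∧ (C ∩ B).Nonempty) ∧
  (∀ a ∈ A, ∃ b ∈ B, ¬ G.Adj a b) ∧
  (∀ b ∈ B, ∃ a ∈ A, ¬ G.Adj b a) ∧
  (∀ u ∈ X, ∀ v ∈ X, ReachableWithin G X u v) ∧
  (∀ v ∈ X, ∃ b ∈ B, ∃ p : G.Walk v b, p.IsPath ∧ (∀ x ∈ p.support, x ∈ X) ∧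
    ∀ x ∈ p.support, x ∈ A → x = v ∨ x = b) ∧
  (∀ v ∈ X, ∃ a ∈ A, ∃ p : G.Walk v a, p.IsPath ∧ (∀ x ∈ p.support, x ∈ X) ∧
    ∀ x ∈ p.support, x ∈ B → x = v ∨ x = a)

/-- The block of decomposition of `G` with respect to a 2-join, keeping the side `X`
(with special sets `A`, `B`) and replacing the other side by a marker path of
length `k` whose endpoint `0` is complete to `A` and endpoint `k` is complete to `B`. -/
def TwoJoinBlock (G : SimpleGraph V) (X A B : Set V) (k : ℕ) :
    SimpleGraph (↥X ⊕ Fin (k + 1)) where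
  Adj x y :=
    match x, y with
    | Sum.inl a, Sum.inl b => G.Adj ↑a ↑b
    | Sum.inl a, Sum.inr i => ((a : V) ∈ A ∧ i = 0) ∨ ((a : V) ∈ B ∧ i = Fin.last k)
    | Sum.inr i, Sum.inl a => ((a : V) ∈ A ∧ i = 0) ∨ ((a : V) ∈ B ∧ i = Fin.last k)
    | Sum.inr i, Sum.inr j => (i : ℕ) + 1 = (j : ℕ) ∨ (j : ℕ) + 1 = (i : ℕ)
  symm := by
    refine ⟨?_⟩
    rintro (a | i) (b | j) h
    · exact h.symm
    · exact h
    · exact h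
    · exact Or.symm h
  loopless := by
    refine ⟨?_⟩
    rintro (a | i) h
    · exact G.irrefl h
    · rcases h with h | h <;> omega

/-- A graph is chordless if no cycle in it has a chord. -/
def ChordlessGraph (G : SimpleGraph V) : Prop :=
  ∀ (u : V) (c : G.Walk u u), c.IsCycle →
    ∀ x ∈ c.support, ∀ y ∈ c.support, G.Adj x y → s(x, y) ∈ c.edges

/-- The subgraph of `G` induced by `S` has a clique cutset. -/
def HasCliqueCutsetOn (G : SimpleGraph V) (S : Set V) : Prop :=
  ∃ K A B : Set V, G.IsClique K ∧ A.Nonempty ∧ B.Nonempty ∧ Disjoint A K ∧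
    Disjoint A B ∧ Disjoint K B ∧ A ∪ K ∪ B = S ∧ ∀ a ∈ A, ∀ b ∈ B, ¬ G.Adj a b

/-- The total weight of a set of vertices. -/
noncomputable def wsum [Fintype V] (w : V → ℕ) (A : Set V) : ℕ :=
  ∑ v ∈ A.toFinite.toFinset, w v

private lemma walk_length_one_edge {G : SimpleGraph V} {a b : V} (p : G.Walk a b)
    (h : p.length = 1) : s(a, b) ∈ p.edges := by
  cases p with
  | nil => simp at h
  | cons hadj q =>
    have hq : q.length = 0 := by simpa using h
    have hcb := SimpleGraph.Walk.eq_of_length_eq_zero hq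
    subst hcb
    simp

private lemma minimal_walk_chordless {G : SimpleGraph V} [DecidableEq V] :
    ∀ {y z : V} (w : G.Walk y z),
      (∀ q : G.Walk y z, (∀ v ∈ q.support, v ∈ w.support) → w.length ≤ q.length) →
      ∀ a ∈ w.support, ∀ b ∈ w.support, G.Adj a b → s(a, b) ∈ w.edges := by
  intro y z w
  induction w with
  | nil =>
    intro _ a ha b hb hab
    simp only [Walk.support_nil, List.mem_singleton] at ha hb
    subst ha; subst hb; exact absurd hab (G.irrefl)
  | @cons y' c z' h w' ih =>
    intro hmin a ha b hb hab
    have hmin' : ∀ q' : G.Walk c z', (∀ v ∈ q'.support, v ∈ w'.support) →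
        w'.length ≤ q'.length := by
      intro q' hq'
      have := hmin (Walk.cons h q') ?_
      · simpa [Walk.length_cons] using this
      · intro v hv
        simp only [Walk.support_cons, List.mem_cons] at hv ⊢
        rcases hv with rfl | hv
        · exact Or.inl rfl
        · exact Or.inr (hq' v hv)
    have key : ∀ b' ∈ w'.support, G.Adj y' b' → s(y', b') ∈ (Walk.cons h w').edges := by
      intro b' hb' hyb'
      by_cases hbc : c = b'
      · subst hbc; simp
      · exfalso
        have hq := hmin (Walk.cons hyb' (w'.dropUntil b' hb')) ?_
        · have hspec := congrArg Walk.length (w'.take_spec hb')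
          rw [Walk.length_append] at hspec
          simp only [Walk.length_cons] at hq
          have h0 : (w'.takeUntil b' hb').length = 0 := by omega
          exact hbc (Walk.eq_of_length_eq_zero h0)
        · intro v hv
          simp only [Walk.support_cons, List.mem_cons] at hv ⊢
          rcases hv with rfl | hv
          · exact Or.inl rfl
          · exact Or.inr (Walk.support_dropUntil_subset _ _ hv)
    simp only [Walk.support_cons, List.mem_cons] at ha hb
    rcases ha with rfl | ha <;> rcases hb with rfl | hb
    · exact absurd hab (G.irrefl)
    · exact key b hb hab
    · rw [Sym2.eq_swap]; exact key a ha hab.symm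
    · have hin := ih hmin' a ha b hb hab
      simp only [Walk.edges_cons]
      exact List.mem_cons_of_mem _ hin

private lemma exists_chordless_path {G : SimpleGraph V} [DecidableEq V] (X : Set V) {y z : V}
    (h : ∃ p : G.Walk y z, ∀ v ∈ p.support, v ∈ X) :
    ∃ p : G.Walk y z, p.IsPath ∧ (∀ v ∈ p.support, v ∈ X) ∧
      ∀ a ∈ p.support, ∀ b ∈ p.support, G.Adj a b → s(a, b) ∈ p.edges := by
  classical
  have hex : ∃ n, ∃ p : G.Walk y z, p.length = n ∧ ∀ v ∈ p.support, v ∈ X := by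
    obtain ⟨p, hp⟩ := h
    exact ⟨p.length, p, rfl, hp⟩
  obtain ⟨w, hwl, hwX⟩ := Nat.find_spec hex
  have hmin : ∀ q : G.Walk y z, (∀ v ∈ q.support, v ∈ X) → Nat.find hex ≤ q.length :=
    fun q hq => Nat.find_min' hex ⟨q, rfl, hq⟩
  refine ⟨w.bypass, w.bypass_isPath, ?_, ?_⟩
  · intro v hv
    exact hwX v (w.support_bypass_subset hv)
  · have hlen : w.bypass.length = Nat.find hex := by
      have h1 : w.bypass.length ≤ Nat.find hex := hwl ▸ w.length_bypass_le
      have h2 : Nat.find hex ≤ w.bypass.length :=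
        hmin _ (fun v hv => hwX v (w.support_bypass_subset hv))
      omega
    apply minimal_walk_chordless
    intro q hq
    rw [hlen]
    exact hmin q (fun v hv => hwX v (w.support_bypass_subset (hq v hv)))

private lemma exit_lemma {G : SimpleGraph V} (S C : Set V) (t : V)
    (hclose : ∀ u ∈ C, ∀ v, v ∉ S → G.Adj u v → v ∈ C) :
    ∀ {a b : V} (w : G.Walk a b), a ∈ C → b ∉ C →
      (∀ v ∈ w.support, v ∈ S → v = t) → ∃ u ∈ C, G.Adj u t := by
  intro a b w
  induction w with
  | nil => intro ha hb _; exact absurd ha hb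
  | @cons a' c b' h w' ih =>
    intro ha hb hsup
    by_cases hc : c ∈ C
    · exact ih hc hb (fun v hv => hsup v (by simp [Walk.support_cons, List.mem_cons]; tauto))
    · by_cases hcS : c ∈ S
      · have := hsup c (by simp) hcS
        subst this
        exact ⟨a', ha, h⟩
      · exact absurd (hclose a' ha c hcS h) hc

private lemma reach_of_no_cut {G : SimpleGraph V} (T : Set V)
    (hns : ¬ ∃ A B : Set V, IsCutsetSplit G A T B) {a b : V}
    (ha : a ∉ T) (hb : b ∉ T) : ∃ p : G.Walk a b, ∀ v ∈ p.support, v ∉ T := by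
  by_contra hcon
  apply hns
  set A : Set V := {v | ∃ p : G.Walk a v, ∀ x ∈ p.support, x ∉ T} with hAdef
  have haA : a ∈ A := ⟨Walk.nil, by simpa using ha⟩
  have hAT : ∀ v ∈ A, v ∉ T := fun v hv => hv.choose_spec v hv.choose.end_mem_support
  have hbA : b ∉ A := fun h => hcon h
  refine ⟨A, Set.univ \ (A ∪ T), ⟨a, haA⟩, ⟨b, by simp [hbA, hb]⟩, ?_, ?_, ?_, ?_, ?_⟩
  · exact Set.disjoint_left.mpr hAT
  · exact Set.disjoint_left.mpr (fun v hv hv' => hv'.2 (Or.inl hv))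
  · exact Set.disjoint_left.mpr (fun v hv hv' => hv'.2 (Or.inr hv))
  · ext v; simp only [Set.mem_union, Set.mem_diff, Set.mem_univ, true_and, iff_true]; tauto
  · intro u hu v hv hadj
    have hvA : v ∈ A := by
      obtain ⟨p, hp⟩ := hu
      refine ⟨p.concat hadj, ?_⟩
      intro x hx
      rw [Walk.support_concat] at hx
      rcases List.mem_append.mp hx with hx | hx
      · exact hp x hx
      · simp only [List.mem_singleton] at hx
        subst hx
        exact fun hvT => hv.2 (Or.inr hvT)
    exact hv.2 (Or.inl hvA)

/-- If a (theta, wheel)-free graph G has a star cutset, then G has a clique cutset. -/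
theorem stmt3 {V : Type u} [Fintype V] (G : SimpleGraph V)
    (hTheta : ¬ ContainsTheta G) (hWheel : ¬ ContainsWheel G)
    (hStar : HasStarCutset G) :
    HasCliqueCutset G := by
  classical
  have hex : ∃ n, ∃ S A B : Set V, S.Nonempty ∧ IsCutsetSplit G A S B ∧
      (∃ x ∈ S, ∀ y ∈ S, y ≠ x → G.Adj x y) ∧ S.ncard = n := by
    obtain ⟨S, A, B, h1, h2, h3⟩ := hStar
    exact ⟨S.ncard, S, A, B, h1, h2, h3, rfl⟩
  obtain ⟨S, A, B, hSne, hsplit, ⟨x, hxS, hstar⟩, hcard⟩ := Nat.find_spec hex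
  obtain ⟨hAne, hBne, hAS, hAB, hSB, huniv, hnoedge⟩ := hsplit
  refine ⟨S, A, B, ?_, hAne, hBne, hAS, hAB, hSB, huniv, hnoedge⟩
  intro y hyS z hzS hne
  rcases eq_or_ne y x with rfl | hyx
  · exact hstar z hzS hne.symm
  rcases eq_or_ne z x with rfl | hzx
  · exact (hstar y hyS hyx).symm
  by_contra hadj
  -- minimality: removing a non-center vertex from S gives a non-cutset
  have hmin : ∀ t ∈ S, t ≠ x → ¬ ∃ A' B' : Set V, IsCutsetSplit G A' (S \ {t}) B' := by
    rintro t htS htx ⟨A', B', hsp⟩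
    have hlt : (S \ {t}).ncard < Nat.find hex := by
      rw [← hcard]
      exact Set.ncard_diff_singleton_lt_of_mem htS (Set.toFinite S)
    refine Nat.find_min hex hlt ⟨S \ {t}, A', B', ⟨x, hxS, fun h => htx h.symm⟩, hsp,
      ⟨x, ⟨hxS, fun h => htx h.symm⟩, fun w hw hwx => hstar w hw.1 hwx⟩, rfl⟩
  obtain ⟨a, haA⟩ := hAne
  obtain ⟨b, hbB⟩ := hBne
  -- the two "components"
  set C₁ : Set V := {v | ∃ p : G.Walk a v, ∀ u ∈ p.support, u ∈ A} with hC₁def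
  set C₂ : Set V := {v | ∃ p : G.Walk b v, ∀ u ∈ p.support, u ∈ B} with hC₂def
  have hC₁A : ∀ v ∈ C₁, v ∈ A := fun v hv => hv.choose_spec v hv.choose.end_mem_support
  have hC₂B : ∀ v ∈ C₂, v ∈ B := fun v hv => hv.choose_spec v hv.choose.end_mem_support
  have haC₁ : a ∈ C₁ := ⟨Walk.nil, by simpa using haA⟩
  have hbC₂ : b ∈ C₂ := ⟨Walk.nil, by simpa using hbB⟩
  have hABcases : ∀ v : V, v ∉ S → v ∈ A ∨ v ∈ B := by
    intro v hvS
    have : v ∈ A ∪ S ∪ B := huniv ▸ Set.mem_univ v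
    rcases this with (h | h) | h
    · exact Or.inl h
    · exact absurd h hvS
    · exact Or.inr h
  have hclose₁ : ∀ u ∈ C₁, ∀ v, v ∉ S → G.Adj u v → v ∈ C₁ := by
    rintro u ⟨p, hp⟩ v hvS hadjuv
    rcases hABcases v hvS with hvA | hvB
    · refine ⟨p.concat hadjuv, ?_⟩
      intro w hw
      rw [Walk.support_concat] at hw
      rcases List.mem_append.mp hw with hw | hw
      · exact hp w hw
      · simp only [List.mem_singleton] at hw; subst hw; exact hvA
    · exact absurd hadjuv (hnoedge u (hp u p.end_mem_support) v hvB)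
  have hclose₂ : ∀ u ∈ C₂, ∀ v, v ∉ S → G.Adj u v → v ∈ C₂ := by
    rintro u ⟨p, hp⟩ v hvS hadjuv
    rcases hABcases v hvS with hvA | hvB
    · exact absurd hadjuv.symm (hnoedge v hvA u (hp u p.end_mem_support))
    · refine ⟨p.concat hadjuv, ?_⟩
      intro w hw
      rw [Walk.support_concat] at hw
      rcases List.mem_append.mp hw with hw | hw
      · exact hp w hw
      · simp only [List.mem_singleton] at hw; subst hw; exact hvB
  have haS : a ∉ S := Set.disjoint_left.mp hAS haA
  have hbS : b ∉ S := Set.disjoint_right.mp hSB hbB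
  have hbC₁ : b ∉ C₁ := fun h => Set.disjoint_left.mp hAB (hC₁A b h) hbB
  have haC₂ : a ∉ C₂ := fun h => Set.disjoint_left.mp hAB haA (hC₂B a h)
  have hnbr : ∀ t ∈ S, t ≠ x → (∃ u ∈ C₁, G.Adj u t) ∧ (∃ u ∈ C₂, G.Adj u t) := by
    intro t htS htx
    obtain ⟨w, hw⟩ := reach_of_no_cut (S \ {t}) (hmin t htS htx)
      (fun h => haS h.1) (fun h => hbS h.1)
    have hsup : ∀ v ∈ w.support, v ∈ S → v = t := by
      intro v hv hvS
      by_contra hvt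
      exact hw v hv ⟨hvS, hvt⟩
    constructor
    · exact exit_lemma S C₁ t hclose₁ w haC₁ hbC₁ hsup
    · refine exit_lemma S C₂ t hclose₂ w.reverse hbC₂ haC₂ ?_
      intro v hv hvS
      exact hsup v (by rwa [Walk.support_reverse, List.mem_reverse] at hv) hvS
  obtain ⟨⟨u₁, hu₁C, hu₁y⟩, ⟨v₁, hv₁C, hv₁y⟩⟩ := hnbr y hyS hyx
  obtain ⟨⟨u₂, hu₂C, hu₂z⟩, ⟨v₂, hv₂C, hv₂z⟩⟩ := hnbr z hzS hzx
  -- walks through A and through B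
  have hQ₁ : ∃ p : G.Walk y z, ∀ v ∈ p.support, v ∈ insert y (insert z A) := by
    obtain ⟨p₁, hp₁⟩ := hu₁C
    obtain ⟨p₂, hp₂⟩ := hu₂C
    refine ⟨Walk.cons hu₁y.symm ((p₁.reverse.append p₂).concat hu₂z), ?_⟩
    intro v hv
    rw [Walk.support_cons, List.mem_cons] at hv
    rcases hv with rfl | hv
    · exact Set.mem_insert _ _
    rw [Walk.support_concat] at hv
    rcases List.mem_append.mp hv with hv | hv
    · rcases (Walk.mem_support_append_iff _ _).mp hv with hv | hv
      · rw [Walk.support_reverse, List.mem_reverse] at hv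
        exact Set.mem_insert_of_mem _ (Set.mem_insert_of_mem _ (hp₁ v hv))
      · exact Set.mem_insert_of_mem _ (Set.mem_insert_of_mem _ (hp₂ v hv))
    · simp only [List.mem_singleton] at hv; subst hv
      exact Set.mem_insert_of_mem _ (Set.mem_insert _ _)
  have hQ₂ : ∃ p : G.Walk y z, ∀ v ∈ p.support, v ∈ insert y (insert z B) := by
    obtain ⟨p₁, hp₁⟩ := hv₁C
    obtain ⟨p₂, hp₂⟩ := hv₂C
    refine ⟨Walk.cons hv₁y.symm ((p₁.reverse.append p₂).concat hv₂z), ?_⟩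
    intro v hv
    rw [Walk.support_cons, List.mem_cons] at hv
    rcases hv with rfl | hv
    · exact Set.mem_insert _ _
    rw [Walk.support_concat] at hv
    rcases List.mem_append.mp hv with hv | hv
    · rcases (Walk.mem_support_append_iff _ _).mp hv with hv | hv
      · rw [Walk.support_reverse, List.mem_reverse] at hv
        exact Set.mem_insert_of_mem _ (Set.mem_insert_of_mem _ (hp₁ v hv))
      · exact Set.mem_insert_of_mem _ (Set.mem_insert_of_mem _ (hp₂ v hv))
    · simp only [List.mem_singleton] at hv; subst hv
      exact Set.mem_insert_of_mem _ (Set.mem_insert _ _)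
  obtain ⟨P₁, hP₁path, hP₁X, hP₁chord⟩ := exists_chordless_path _ hQ₁
  obtain ⟨P₂, hP₂path, hP₂X, hP₂chord⟩ := exists_chordless_path _ hQ₂
  have hP₁mem : ∀ v ∈ P₁.support, v = y ∨ v = z ∨ v ∈ A := by
    intro v hv
    have := hP₁X v hv
    simp only [Set.mem_insert_iff] at this
    tauto
  have hP₂mem : ∀ v ∈ P₂.support, v = y ∨ v = z ∨ v ∈ B := by
    intro v hv
    have := hP₂X v hv
    simp only [Set.mem_insert_iff] at this
    tauto
  have hyA : y ∉ A := Set.disjoint_right.mp hAS hyS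
  have hzA : z ∉ A := Set.disjoint_right.mp hAS hzS
  have hyB : y ∉ B := Set.disjoint_left.mp hSB hyS
  have hzB : z ∉ B := Set.disjoint_left.mp hSB hzS
  have hinter : ∀ v, v ∈ P₁.support → v ∈ P₂.support → v = y ∨ v = z := by
    intro v hv1 hv2
    rcases hP₁mem v hv1 with rfl | rfl | hvA
    · exact Or.inl rfl
    · exact Or.inr rfl
    rcases hP₂mem v hv2 with rfl | rfl | hvB
    · exact absurd hvA hyA
    · exact absurd hvA hzA
    · exact absurd hvB (Set.disjoint_left.mp hAB hvA)
  -- lengths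
  have hlen₁ : 2 ≤ P₁.length := by
    have h0 : P₁.length ≠ 0 := fun h => hne (Walk.eq_of_length_eq_zero h)
    have h1 : P₁.length ≠ 1 := fun h =>
      hadj ((SimpleGraph.mem_edgeSet G).mp (P₁.edges_subset_edgeSet (walk_length_one_edge P₁ h)))
    omega
  have hlen₂ : 2 ≤ P₂.length := by
    have h0 : P₂.length ≠ 0 := fun h => hne (Walk.eq_of_length_eq_zero h)
    have h1 : P₂.length ≠ 1 := fun h =>
      hadj ((SimpleGraph.mem_edgeSet G).mp (P₂.edges_subset_edgeSet (walk_length_one_edge P₂ h)))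
    omega
  -- the hole
  set c : G.Walk y y := P₁.append P₂.reverse with hcdef
  have hcsup : ∀ v, v ∈ c.support ↔ v ∈ P₁.support ∨ v ∈ P₂.support := by
    intro v
    rw [hcdef, Walk.mem_support_append_iff, Walk.support_reverse, List.mem_reverse]
  have hcedge : ∀ e, e ∈ c.edges ↔ e ∈ P₁.edges ∨ e ∈ P₂.edges := by
    intro e
    rw [hcdef, Walk.edges_append, List.mem_append, Walk.edges_reverse, List.mem_reverse]
  have hP₁nodup := hP₁path.support_nodup
  have hP₂rnodup := hP₂path.reverse.support_nodup
  have hyP₁ : y ∈ P₁.support := P₁.start_mem_support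
  have hzP₁ : z ∈ P₁.support := P₁.end_mem_support
  have hyP₂ : y ∈ P₂.support := P₂.start_mem_support
  have hzP₂ : z ∈ P₂.support := P₂.end_mem_support
  have hcyc : c.IsCycle := by
    rw [Walk.isCycle_def]
    refine ⟨⟨?_⟩, ?_, ?_⟩
    · rw [hcdef, Walk.edges_append]
      refine List.Nodup.append hP₁path.isTrail.edges_nodup hP₂path.reverse.isTrail.edges_nodup ?_
      intro e he₁ he₂
      rw [Walk.edges_reverse, List.mem_reverse] at he₂
      revert he₁ he₂
      induction e using Sym2.ind with
      | _ u v =>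
        intro he₁ he₂
        have huv : G.Adj u v := (SimpleGraph.mem_edgeSet G).mp (P₁.edges_subset_edgeSet he₁)
        have hu := hinter u (P₁.fst_mem_support_of_mem_edges he₁)
          (P₂.fst_mem_support_of_mem_edges he₂)
        have hv := hinter v (P₁.snd_mem_support_of_mem_edges he₁)
          (P₂.snd_mem_support_of_mem_edges he₂)
        rcases hu with rfl | rfl <;> rcases hv with rfl | rfl
        · exact G.irrefl huv
        · exact hadj huv
        · exact hadj huv.symm
        · exact G.irrefl huv
    · intro h
      have := congrArg Walk.length h
      rw [hcdef, Walk.length_append, Walk.length_reverse] at this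
      simp only [Walk.length_nil] at this
      omega
    · have hsup : c.support.tail = P₁.support.tail ++ P₂.reverse.support.tail := by
        rw [hcdef, Walk.support_append, P₁.support_eq_cons, List.cons_append, List.tail_cons]
        rfl
      rw [hsup]
      rw [P₁.support_eq_cons] at hP₁nodup
      rw [P₂.reverse.support_eq_cons] at hP₂rnodup
      obtain ⟨hy₁, hn₁⟩ := List.nodup_cons.mp hP₁nodup
      obtain ⟨hz₂, hn₂⟩ := List.nodup_cons.mp hP₂rnodup
      refine List.Nodup.append hn₁ hn₂ ?_
      intro v hv₁ hv₂
      have hv₁' : v ∈ P₁.support := by rw [P₁.support_eq_cons]; exact List.mem_cons_of_mem _ hv₁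
      have hv₂' : v ∈ P₂.support := by
        rw [← List.mem_reverse, ← Walk.support_reverse, P₂.reverse.support_eq_cons]
        exact List.mem_cons_of_mem _ hv₂
      rcases hinter v hv₁' hv₂' with rfl | rfl
      · exact hy₁ hv₁
      · exact hz₂ hv₂
  have hclen : 4 ≤ c.length := by
    rw [hcdef, Walk.length_append, Walk.length_reverse]
    omega
  have hchord : ∀ u ∈ c.support, ∀ v ∈ c.support, G.Adj u v → s(u, v) ∈ c.edges := by
    intro u hu v hv huv
    rw [hcsup] at hu hv
    by_cases h11 : u ∈ P₁.support ∧ v ∈ P₁.support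
    · exact (hcedge _).mpr (Or.inl (hP₁chord u h11.1 v h11.2 huv))
    by_cases h22 : u ∈ P₂.support ∧ v ∈ P₂.support
    · exact (hcedge _).mpr (Or.inr (hP₂chord u h22.1 v h22.2 huv))
    exfalso
    rcases hu with hu1 | hu2 <;> rcases hv with hv1 | hv2
    · exact h11 ⟨hu1, hv1⟩
    · -- u ∈ P₁ \ P₂, v ∈ P₂ \ P₁
      have hvP₁ : v ∉ P₁.support := fun h => h11 ⟨hu1, h⟩
      have huP₂ : u ∉ P₂.support := fun h => h22 ⟨h, hv2⟩
      have huA : u ∈ A := by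
        rcases hP₁mem u hu1 with rfl | rfl | h
        · exact absurd hyP₂ huP₂
        · exact absurd hzP₂ huP₂
        · exact h
      have hvB : v ∈ B := by
        rcases hP₂mem v hv2 with rfl | rfl | h
        · exact absurd hyP₁ hvP₁
        · exact absurd hzP₁ hvP₁
        · exact h
      exact hnoedge u huA v hvB huv
    · have huP₁ : u ∉ P₁.support := fun h => h11 ⟨h, hv1⟩
      have hvP₂ : v ∉ P₂.support := fun h => h22 ⟨hu2, h⟩
      have hvA : v ∈ A := by
        rcases hP₁mem v hv1 with rfl | rfl | h
        · exact absurd hyP₂ hvP₂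
        · exact absurd hzP₂ hvP₂
        · exact h
      have huB : u ∈ B := by
        rcases hP₂mem u hu2 with rfl | rfl | h
        · exact absurd hyP₁ huP₁
        · exact absurd hzP₁ huP₁
        · exact h
      exact hnoedge v hvA u huB huv.symm
    · exact h22 ⟨hu2, hv2⟩
  have hhole : IsHole G c := ⟨hcyc, hclen, hchord⟩
  have hxP₁ : x ∉ P₁.support := by
    intro h
    rcases hP₁mem x h with rfl | rfl | hxA
    · exact hyx rfl
    · exact hzx rfl
    · exact Set.disjoint_right.mp hAS hxS hxA
  have hxP₂ : x ∉ P₂.support := by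
    intro h
    rcases hP₂mem x h with rfl | rfl | hxB
    · exact hyx rfl
    · exact hzx rfl
    · exact Set.disjoint_left.mp hSB hxS hxB
  have hxc : x ∉ c.support := by
    intro h
    rcases (hcsup x).mp h with h | h
    · exact hxP₁ h
    · exact hxP₂ h
  have hxy : G.Adj x y := hstar y hyS hyx
  have hxz : G.Adj x z := hstar z hzS hzx
  by_cases hthird : ∃ t ∈ c.support, t ≠ y ∧ t ≠ z ∧ G.Adj x t
  · obtain ⟨t, htc, hty, htz, hxt⟩ := hthird
    exact hWheel ⟨y, c, x, y, z, t, hhole, hxc, c.start_mem_support,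
      (hcsup z).mpr (Or.inl hzP₁), htc, hne, hty.symm, htz.symm, hxy, hxz, hxt⟩
  · push_neg at hthird
    set P₃ : G.Walk y z := Walk.cons hxy.symm (Walk.cons hxz Walk.nil) with hP₃def
    have hP₃sup : ∀ v, v ∈ P₃.support ↔ v = y ∨ v = x ∨ v = z := by
      intro v
      simp [hP₃def]
    have hP₃path : P₃.IsPath := by
      rw [Walk.isPath_def, hP₃def]
      simp [hxy.ne', hxz.ne, hne]
    have hP₃edges : ∀ e, e ∈ P₃.edges ↔ e = s(y, x) ∨ e = s(x, z) := by
      intro e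
      simp [hP₃def]
    refine hTheta ⟨y, z, P₁, P₂, P₃, hne, hP₁path, hP₂path, hP₃path, hlen₁, hlen₂,
      by simp [hP₃def], hinter, ?_, ?_, ?_⟩
    · intro v hv1 hv3
      rcases (hP₃sup v).mp hv3 with rfl | rfl | rfl
      · exact Or.inl rfl
      · exact absurd hv1 hxP₁
      · exact Or.inr rfl
    · intro v hv2 hv3
      rcases (hP₃sup v).mp hv3 with rfl | rfl | rfl
      · exact Or.inl rfl
      · exact absurd hv2 hxP₂
      · exact Or.inr rfl
    · intro u v hu hv huv
      -- reduce membership to: = x or in the hole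
      have hred : ∀ w : V, (w ∈ P₁.support ∨ w ∈ P₂.support ∨ w ∈ P₃.support) →
          w = x ∨ w ∈ c.support := by
        intro w hw
        rcases hw with hw | hw | hw
        · exact Or.inr ((hcsup w).mpr (Or.inl hw))
        · exact Or.inr ((hcsup w).mpr (Or.inr hw))
        · rcases (hP₃sup w).mp hw with rfl | rfl | rfl
          · exact Or.inr ((hcsup w).mpr (Or.inl hyP₁))
          · exact Or.inl rfl
          · exact Or.inr ((hcsup w).mpr (Or.inl hzP₁))
      have hxedge : ∀ w, w ∈ c.support → G.Adj x w → s(x, w) ∈ P₃.edges := by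
        intro w hwc hxw
        by_cases hwy : w = y
        · subst hwy; exact (hP₃edges _).mpr (Or.inl Sym2.eq_swap)
        by_cases hwz : w = z
        · subst hwz; exact (hP₃edges _).mpr (Or.inr rfl)
        · exact absurd hxw (hthird w hwc hwy hwz)
      rcases hred u hu with rfl | huc
      · rcases hred v hv with rfl | hvc
        · exact absurd huv (G.irrefl)
        · exact Or.inr (Or.inr (hxedge v hvc huv))
      · rcases hred v hv with rfl | hvc
        · have := hxedge u huc huv.symm
          rw [Sym2.eq_swap] at this
          exact Or.inr (Or.inr this)
        · rcases (hcedge _).mp (hchord u ((hcsup u).mpr ((hcsup u).mp huc))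
            v hvc huv) with h | h
          · exact Or.inl h
          · exact Or.inr (Or.inl h)
end

section
/- Every (wheel, diamond, claw)-free graph is isomorphic to the line graph L(R) of some triangle-free chordless graph R. -/
open SimpleGraph

universe u

variable {V : Type u}

namespace Stmt16Aux


/-- Two consecutive entries in a list. -/
def AdjPair {α : Type*} (l : List α) (e f : α) : Prop :=
  ∃ l₁ l₂, l = l₁ ++ e :: f :: l₂

lemma AdjPair.cons {α : Type*} {l : List α} {e f : α} (a : α) (h : AdjPair l e f) :
    AdjPair (a :: l) e f := by
  obtain ⟨l₁, l₂, rfl⟩ := h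
  exact ⟨a :: l₁, l₂, rfl⟩

lemma adjPair_cons_iff {α : Type*} {a : α} {l : List α} {e f : α} :
    AdjPair (a :: l) e f ↔ (a = e ∧ ∃ l₂, l = f :: l₂) ∨ AdjPair l e f := by
  constructor
  · rintro ⟨l₁, l₂, hl⟩
    cases l₁ with
    | nil => simp only [List.nil_append, List.cons.injEq] at hl; exact Or.inl ⟨hl.1, l₂, hl.2⟩
    | cons b l₁ =>
      simp only [List.cons_append, List.cons.injEq] at hl
      exact Or.inr ⟨l₁, l₂, hl.2⟩
  · rintro (⟨rfl, l₂, rfl⟩ | h)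
    · exact ⟨[], l₂, rfl⟩
    · exact h.cons a

lemma AdjPair.map {α β : Type*} {l : List α} {e f : α} (g : α → β) (h : AdjPair l e f) :
    AdjPair (l.map g) (g e) (g f) := by
  obtain ⟨l₁, l₂, rfl⟩ := h
  exact ⟨l₁.map g, l₂.map g, by simp⟩

lemma AdjPair.mem_left {α : Type*} {l : List α} {e f : α} (h : AdjPair l e f) : e ∈ l := by
  obtain ⟨l₁, l₂, rfl⟩ := h; simp

lemma AdjPair.mem_right {α : Type*} {l : List α} {e f : α} (h : AdjPair l e f) : f ∈ l := by
  obtain ⟨l₁, l₂, rfl⟩ := h; simp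

lemma sym2_eq {α : Type*} {x y : α} (hxy : x ≠ y) {e : Sym2 α} (hx : x ∈ e) (hy : y ∈ e) :
    e = s(x, y) := by
  induction e with
  | _ a b =>
    rw [Sym2.mem_iff] at hx hy
    rcases hx with rfl | rfl <;> rcases hy with rfl | rfl
    · exact absurd rfl hxy
    · rfl
    · exact Sym2.eq_swap
    · exact absurd rfl hxy

variable {W : Type*} {G : SimpleGraph W}

lemma mem_support_of_mem_edge {u v a : W} (p : G.Walk u v) {e : Sym2 W}
    (he : e ∈ p.edges) (ha : a ∈ e) : a ∈ p.support := by
  induction e with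
  | _ x y =>
    rcases Sym2.mem_iff.1 ha with rfl | rfl
    · exact p.fst_mem_support_of_mem_edges he
    · exact p.snd_mem_support_of_mem_edges he

/-- In a path, an edge containing the initial vertex is the first edge. -/
lemma edge_eq_head {a b : W} (p : G.Walk a b) (hp : p.IsPath) :
    ∀ e ∈ p.edges, a ∈ e → ∃ (h : p.edges ≠ []), e = p.edges.head h := by
  induction p with
  | nil => simp
  | @cons u v w h q ih =>
    intro e he ha
    rw [Walk.edges_cons] at he ⊢
    rw [Walk.cons_isPath_iff] at hp
    rcases List.mem_cons.1 he with rfl | he'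
    · exact ⟨List.cons_ne_nil _ _, rfl⟩
    · exact absurd (mem_support_of_mem_edge q he' ha) hp.2

/-- In any walk, the last edge contains the final vertex. -/
lemma end_mem_getLast_edge {a b : W} (q : G.Walk a b) :
    ∀ (h : q.edges ≠ []), b ∈ q.edges.getLast h := by
  induction q with
  | nil => simp
  | @cons u v w h q ih =>
    intro hne
    cases q with
    | nil => simp
    | cons h' q' =>
      have hne' : (Walk.cons h' q').edges ≠ [] := by simp
      have heq : (Walk.cons h (Walk.cons h' q')).edges.getLast hne =
          (Walk.cons h' q').edges.getLast hne' := List.getLast_cons hne'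
      rw [heq]
      exact ih hne'

/-- In a path, an edge containing the final vertex is the last edge. -/
lemma edge_eq_getLast {a b : W} (p : G.Walk a b) (hp : p.IsPath) :
    ∀ e ∈ p.edges, b ∈ e → ∃ (h : p.edges ≠ []), e = p.edges.getLast h := by
  induction p with
  | nil => simp
  | @cons u v w h q ih =>
    intro e he hb
    rw [Walk.cons_isPath_iff] at hp
    rw [Walk.edges_cons] at he ⊢
    rcases List.mem_cons.1 he with rfl | he'
    · rcases Sym2.mem_iff.1 hb with rfl | rfl
      · exact absurd q.end_mem_support hp.2
      · have : q = Walk.nil := Walk.isPath_iff_eq_nil.1 hp.1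
        subst this
        exact ⟨by simp, by simp⟩
    · obtain ⟨h', rfl⟩ := ih hp.1 e he' hb
      refine ⟨by simp, ?_⟩
      rw [List.getLast_cons h']

/-- In a path, two distinct edges sharing a vertex are consecutive. -/
lemma path_adjPair {a b : W} (p : G.Walk a b) (hp : p.IsPath) :
    ∀ e ∈ p.edges, ∀ f ∈ p.edges, e ≠ f → ∀ x, x ∈ e → x ∈ f →
      AdjPair p.edges e f ∨ AdjPair p.edges f e := by
  induction p with
  | nil => simp
  | @cons u v w h q ih =>
    intro e he f hf hef x hxe hxf
    rw [Walk.cons_isPath_iff] at hp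
    rw [Walk.edges_cons] at he hf ⊢
    have key : ∀ g ∈ q.edges, x ∈ s(u, v) → x ∈ g →
        ∃ (h' : q.edges ≠ []), g = q.edges.head h' := by
      intro g hg hx hxg
      rcases Sym2.mem_iff.1 hx with rfl | rfl
      · exact absurd (mem_support_of_mem_edge q hg hxg) hp.2
      · exact edge_eq_head q hp.1 g hg hxg
    rcases List.mem_cons.1 he with rfl | he' <;> rcases List.mem_cons.1 hf with rfl | hf'
    · exact absurd rfl hef
    · obtain ⟨h', rfl⟩ := key f hf' hxe hxf
      exact Or.inl ⟨[], q.edges.tail, by rw [List.nil_append, List.cons_head_tail]⟩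
    · obtain ⟨h', rfl⟩ := key e he' hxf hxe
      exact Or.inr ⟨[], q.edges.tail, by rw [List.nil_append, List.cons_head_tail]⟩
    · exact (ih hp.1 e he' f hf' hef x hxe hxf).imp (AdjPair.cons _) (AdjPair.cons _)

/-- In a cycle, two distinct edges sharing a vertex are consecutive or the (head, last) pair. -/
lemma cycle_adjPair {u : W} (c : G.Walk u u) (hc : c.IsCycle) :
    ∀ e ∈ c.edges, ∀ f ∈ c.edges, e ≠ f → ∀ x, x ∈ e → x ∈ f →
      AdjPair c.edges e f ∨ AdjPair c.edges f e ∨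
      ∃ (h : c.edges ≠ []), (e = c.edges.head h ∧ f = c.edges.getLast h) ∨
        (f = c.edges.head h ∧ e = c.edges.getLast h) := by
  cases c with
  | nil => exact absurd hc.three_le_length (by simp)
  | @cons _ v _ h q =>
    rw [Walk.cons_isCycle_iff] at hc
    intro e he f hf hef x hxe hxf
    rw [Walk.edges_cons] at he hf ⊢
    have key : ∀ g ∈ q.edges, x ∈ s(u, v) → x ∈ g →
        (∃ (h' : q.edges ≠ []), g = q.edges.head h') ∨
        (∃ (h' : q.edges ≠ []), g = q.edges.getLast h') := by
      intro g hg hx hxg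
      rcases Sym2.mem_iff.1 hx with rfl | rfl
      · exact Or.inr (edge_eq_getLast q hc.1 g hg hxg)
      · exact Or.inl (edge_eq_head q hc.1 g hg hxg)
    rcases List.mem_cons.1 he with rfl | he' <;> rcases List.mem_cons.1 hf with rfl | hf'
    · exact absurd rfl hef
    · rcases key f hf' hxe hxf with ⟨h', rfl⟩ | ⟨h', rfl⟩
      · exact Or.inl ⟨[], q.edges.tail, by rw [List.nil_append, List.cons_head_tail]⟩
      · refine Or.inr (Or.inr ⟨by simp, Or.inl ⟨rfl, ?_⟩⟩)
        rw [List.getLast_cons h']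
    · rcases key e he' hxf hxe with ⟨h', rfl⟩ | ⟨h', rfl⟩
      · exact Or.inr (Or.inl ⟨[], q.edges.tail, by rw [List.nil_append, List.cons_head_tail]⟩)
      · refine Or.inr (Or.inr ⟨by simp, Or.inr ⟨rfl, ?_⟩⟩)
        rw [List.getLast_cons h']
    · refine (path_adjPair q hc.1 e he' f hf' hef x hxe hxf).imp (AdjPair.cons _)
        (fun h' => Or.inl (h'.cons _))

/-- A cycle based at `x` has two distinct edges containing `x`. -/
lemma cycle_edges_at_start {x : W} (c : G.Walk x x) (hc : c.IsCycle) :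
    ∃ e ∈ c.edges, ∃ f ∈ c.edges, e ≠ f ∧ x ∈ e ∧ x ∈ f := by
  cases c with
  | nil => exact absurd hc.three_le_length (by simp)
  | @cons _ v _ h q =>
    have hq : q.edges ≠ [] := by
      have h3 := hc.three_le_length
      rw [Walk.length_cons] at h3
      intro hnil
      rw [← Walk.length_edges, hnil] at h3
      simp at h3
    refine ⟨s(x, v), ?_, q.edges.getLast hq, ?_, ?_, ?_, ?_⟩
    · simp
    · rw [Walk.edges_cons]
      exact List.mem_cons_of_mem _ (List.getLast_mem hq)
    · intro heq
      have hnd := hc.edges_nodup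
      rw [Walk.edges_cons, List.nodup_cons] at hnd
      exact hnd.1 (heq ▸ List.getLast_mem hq)
    · simp
    · exact end_mem_getLast_edge q hq

/-- Any vertex on a cycle has two distinct edges of the cycle containing it. -/
lemma cycle_two_edges {u x : W} (c : G.Walk u u) (hc : c.IsCycle) (hx : x ∈ c.support) :
    ∃ e ∈ c.edges, ∃ f ∈ c.edges, e ≠ f ∧ x ∈ e ∧ x ∈ f := by
  classical
  obtain ⟨e, he, f, hf, hef, hxe, hxf⟩ := cycle_edges_at_start (c.rotate x hx) (hc.rotate (u := x) hx)
  have hmem : ∀ g : Sym2 W, g ∈ (c.rotate x hx).edges ↔ g ∈ c.edges :=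
    fun g => (c.rotate_edges x hx).mem_iff
  exact ⟨e, (hmem e).1 he, f, (hmem f).1 hf, hef, hxe, hxf⟩

/-- For a path `q` from `a` to `b` of length at least 2, `s(b,a)` is not an edge of `q`. -/
lemma closing_not_mem {a b : W} (q : G.Walk a b) (hq : q.IsPath) (h2 : 2 ≤ q.length) :
    s(b, a) ∉ q.edges := by
  induction q with
  | nil => simp
  | @cons u v w h q ih =>
    rw [Walk.cons_isPath_iff] at hq
    rw [Walk.edges_cons]
    intro hmem
    rcases List.mem_cons.1 hmem with heq | hmem'
    · rw [Sym2.eq_iff] at heq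
      rcases heq with ⟨rfl, rfl⟩ | ⟨rfl, -⟩
      · exact G.irrefl h
      · have : q = Walk.nil := Walk.isPath_iff_eq_nil.1 hq.1
        subst this
        simp at h2
    · exact hq.2 (q.snd_mem_support_of_mem_edges hmem')

/-- In any walk, consecutive support entries form an edge. -/
lemma mem_edges_of_adjPair {a b : W} (q : G.Walk a b) :
    ∀ x y, AdjPair q.support x y → s(x, y) ∈ q.edges := by
  induction q with
  | nil =>
    intro x y h
    rcases adjPair_cons_iff.1 (by simpa using h) with ⟨_, _, h'⟩ | h'
    · simp at h'
    · obtain ⟨l₁, l₂, hl⟩ := h'; simp at hl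
  | @cons u v w h q ih =>
    intro x y hxy
    rw [Walk.support_cons] at hxy
    rw [Walk.edges_cons]
    rcases adjPair_cons_iff.1 hxy with ⟨rfl, l₂, hl⟩ | h'
    · have : y = v := by
        have := q.support_eq_cons
        rw [this] at hl
        exact (List.cons.injEq _ _ _ _ ▸ hl).1.symm
      subst this
      simp
    · exact List.mem_cons_of_mem _ (ih x y h')

/-- Build a walk from a chain of adjacent vertices. -/
lemma walk_of_chain : ∀ (x : W) (l : List W), List.Chain G.Adj x l →
    ∃ q : G.Walk x ((x :: l).getLast (List.cons_ne_nil _ _)), q.support = x :: l := by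
  intro x l
  induction l generalizing x with
  | nil => exact fun _ => ⟨Walk.nil, rfl⟩
  | cons y l ih =>
    intro hchain
    simp only [List.Chain, List.isChain_cons_cons] at hchain
    obtain ⟨q, hq⟩ := ih y hchain.2
    exact ⟨Walk.cons hchain.1 q, (by rw [Walk.support_cons, hq] : (Walk.cons hchain.1 q).support = x :: y :: l)⟩


lemma head_ne_getLast {α : Type*} {l : List α} (h : l ≠ []) (hnd : l.Nodup) (h2 : 2 ≤ l.length) :
    l.head h ≠ l.getLast h := by
  cases l with
  | nil => exact absurd rfl h
  | cons a l' =>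
    cases l' with
    | nil => simp at h2
    | cons b l'' =>
      simp only [List.head_cons]
      intro heq
      have hmem : (a :: b :: l'').getLast (List.cons_ne_nil _ _) ∈ b :: l'' := by
        rw [List.getLast_cons (List.cons_ne_nil _ _)]
        exact List.getLast_mem _
      rw [← heq] at hmem
      exact (List.nodup_cons.1 hnd).1 hmem

lemma start_mem_head_edge {W : Type*} {G : SimpleGraph W} {a b : W} (p : G.Walk a b)
    (h : p.edges ≠ []) : a ∈ p.edges.head h := by
  cases p with
  | nil => simp at h
  | cons h' q => simp

lemma edges_chain' {W : Type*} {G : SimpleGraph W} {a b : W} (p : G.Walk a b) :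
    List.Chain' (fun e f => ∃ w, w ∈ e ∧ w ∈ f) p.edges := by
  induction p with
  | nil => simp [List.Chain']
  | @cons u v w h q ih =>
    cases q with
    | nil => simp [List.Chain']
    | @cons a' b' c' h' q' =>
      simp only [Walk.edges_cons, List.Chain', List.isChain_cons_cons]
      refine ⟨⟨v, by simp, by simp⟩, ?_⟩
      rw [← Walk.edges_cons h']
      exact ih

section Abstract

variable {V W : Type*} {G : SimpleGraph V} {R : SimpleGraph W} (emap : V → Sym2 W)

/-- shared vertex + distinctness gives adjacency of corresponding line-graph vertices -/
lemma abstract_triangle_free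
    (h3 : ∀ e ∈ R.edgeSet, ∃ v, emap v = e)
    (h4 : ∀ u v : V, G.Adj u v ↔ u ≠ v ∧ ∃ w, w ∈ emap u ∧ w ∈ emap v)
    (h5 : ∀ u v w : V, G.Adj u v → G.Adj u w → G.Adj v w →
      ∃ ω, ω ∈ emap u ∧ ω ∈ emap v ∧ ω ∈ emap w) :
    R.CliqueFree 3 := by
  classical
  intro s hs
  rw [is3Clique_iff] at hs
  obtain ⟨x, y, z, hxy, hxz, hyz, -⟩ := hs
  obtain ⟨u, hu⟩ := h3 s(x, y) hxy
  obtain ⟨v, hv⟩ := h3 s(x, z) hxz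
  obtain ⟨w, hw⟩ := h3 s(y, z) hyz
  have adj : ∀ (a b : V) (p : W), p ∈ emap a → p ∈ emap b → emap a ≠ emap b → G.Adj a b := by
    intro a b p hpa hpb hne
    exact (h4 a b).2 ⟨fun h => hne (by rw [h]), p, hpa, hpb⟩
  have huv : G.Adj u v := by
    refine adj u v x (by rw [hu]; simp) (by rw [hv]; simp) ?_
    rw [hu, hv]
    intro heq
    rw [Sym2.eq_iff] at heq
    rcases heq with ⟨-, h⟩ | ⟨h, -⟩
    · exact hyz.ne h
    · exact hxz.ne h
  have huw : G.Adj u w := by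
    refine adj u w y (by rw [hu]; simp) (by rw [hw]; simp) ?_
    rw [hu, hw]
    intro heq
    rw [Sym2.eq_iff] at heq
    rcases heq with ⟨h, -⟩ | ⟨h, -⟩
    · exact hxy.ne h
    · exact hxz.ne h
  have hvw : G.Adj v w := by
    refine adj v w z (by rw [hv]; simp) (by rw [hw]; simp) ?_
    rw [hv, hw]
    intro heq
    rw [Sym2.eq_iff] at heq
    rcases heq with ⟨h, -⟩ | ⟨-, h⟩
    · exact hxy.ne h
    · exact hyz.ne h.symm
  obtain ⟨ω, hω1, hω2, hω3⟩ := h5 u v w huv huw hvw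
  rw [hu] at hω1; rw [hv] at hω2; rw [hw] at hω3
  rw [Sym2.mem_iff] at hω1 hω2 hω3
  rcases hω1 with h1 | h1
  · rcases hω3 with h3 | h3
    · exact hxy.ne (h1.symm.trans h3)
    · exact hxz.ne (h1.symm.trans h3)
  · rcases hω2 with h2 | h2
    · exact hxy.ne (h2.symm.trans h1)
    · exact hyz.ne (h1.symm.trans h2)

lemma abstract_chordless
    (h2 : Function.Injective emap)
    (h3 : ∀ e ∈ R.edgeSet, ∃ v, emap v = e)
    (h4 : ∀ u v : V, G.Adj u v ↔ u ≠ v ∧ ∃ w, w ∈ emap u ∧ w ∈ emap v)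
    (h5 : ∀ u v w : V, G.Adj u v → G.Adj u w → G.Adj v w →
      ∃ ω, ω ∈ emap u ∧ ω ∈ emap v ∧ ω ∈ emap w)
    (hW : ¬ ContainsWheel G) :
    ChordlessGraph R := by
  classical
  intro u c hc x hx y hy hxy
  by_contra hchord
  have htf : R.CliqueFree 3 := abstract_triangle_free emap h3 h4 h5
  -- length at least 4
  have hlen : 4 ≤ c.length := by
    have h3l := hc.three_le_length
    rcases Nat.lt_or_ge c.length 4 with h4' | h4'
    · have hlen3 : c.length = 3 := by omega
      obtain ⟨s, hs⟩ := is3Clique_iff_exists_cycle_length_three.2 ⟨u, c, hc, hlen3⟩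
      exact absurd hs (htf s)
    · exact h4'
  obtain ⟨z₀, hz₀⟩ := h3 s(x, y) hxy
  have hVne : Nonempty V := ⟨z₀⟩
  set vmap : Sym2 W → V := Function.invFun emap with hvmapdef
  have hvmap : ∀ e ∈ R.edgeSet, emap (vmap e) = e := fun e he => Function.invFun_eq (h3 e he)
  have hvne : ∀ e ∈ R.edgeSet, ∀ f ∈ R.edgeSet, e ≠ f → vmap e ≠ vmap f := by
    intro e he f hf hne h
    exact hne (by rw [← hvmap e he, ← hvmap f hf, h])
  have hadjv : ∀ e ∈ R.edgeSet, ∀ f ∈ R.edgeSet, e ≠ f → ∀ w, w ∈ e → w ∈ f →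
      G.Adj (vmap e) (vmap f) := by
    intro e he f hf hne w hwe hwf
    exact (h4 _ _).2 ⟨hvne e he f hf hne, w, by rwa [hvmap e he], by rwa [hvmap f hf]⟩
  have hadjv' : ∀ e ∈ R.edgeSet, ∀ f ∈ R.edgeSet, G.Adj (vmap e) (vmap f) →
      e ≠ f ∧ ∃ w, w ∈ e ∧ w ∈ f := by
    intro e he f hf hadj
    obtain ⟨hne, w, hw1, hw2⟩ := (h4 _ _).1 hadj
    rw [hvmap e he] at hw1
    rw [hvmap f hf] at hw2
    exact ⟨fun h => hne (by rw [h]), w, hw1, hw2⟩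
  set L := c.edges with hL
  have hLsub : ∀ e ∈ L, e ∈ R.edgeSet := fun e he => c.edges_subset_edgeSet he
  have hLnd : L.Nodup := hc.edges_nodup
  have hLlen : L.length = c.length := c.length_edges
  have hLne : L ≠ [] := by
    intro h; rw [h] at hLlen; simp at hLlen; omega
  set xs := L.map vmap with hxsdef
  have hxslen : xs.length = L.length := List.length_map vmap
  have hxsne : xs ≠ [] := by
    intro h
    rw [h] at hxslen
    exact hLne (List.length_eq_zero_iff.1 hxslen.symm)
  have hxsmem : ∀ a ∈ xs, ∃ e ∈ L, vmap e = a := by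
    intro a ha
    rw [hxsdef] at ha
    obtain ⟨e, he, rfl⟩ := List.mem_map.1 ha
    exact ⟨e, he, rfl⟩
  -- xs has no duplicates
  have hxsnd : xs.Nodup := by
    rw [hxsdef]
    refine hLnd.map_on ?_
    intro e he f hf hef
    by_contra hne
    exact hvne e (hLsub e he) f (hLsub f hf) hne hef
  -- chain of adjacencies along xs
  have hchain : List.Chain' G.Adj xs := by
    have hshare := edges_chain' c
    rw [← hL] at hshare
    simp only [List.Chain', List.isChain_iff_getElem] at hshare ⊢
    intro i hi
    rw [hxsdef, List.length_map] at hi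
    have hij : L.get ⟨i, by omega⟩ ≠ L.get ⟨i + 1, by omega⟩ := by
      intro h
      have := (List.Nodup.get_inj_iff hLnd).1 h
      simp at this
    obtain ⟨w, hw1, hw2⟩ := hshare i hi
    have e1 : xs.get ⟨i, by rw [hxsdef, List.length_map]; omega⟩ = vmap (L.get ⟨i, by omega⟩) := by
      simp [hxsdef]
    have e2 : xs.get ⟨i + 1, by rw [hxsdef, List.length_map]; omega⟩ =
        vmap (L.get ⟨i + 1, by omega⟩) := by
      simp [hxsdef]
    simp only [List.get_eq_getElem] at e1 e2
    rw [e1, e2]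
    exact hadjv _ (hLsub _ (L.get_mem _)) _ (hLsub _ (L.get_mem _)) hij w hw1 hw2
  -- decompose xs
  obtain ⟨x₀, rest, hxs⟩ : ∃ x₀ rest, xs = x₀ :: rest := by
    cases hxs' : xs with
    | nil => exact absurd hxs' hxsne
    | cons a l => exact ⟨a, l, rfl⟩
  -- build the walk
  obtain ⟨q₀, hq₀⟩ := walk_of_chain x₀ rest (by rw [hxs] at hchain; exact hchain)
  have hxshead : x₀ = vmap (L.head hLne) := by
    have h1 : xs.head? = some x₀ := by rw [hxs]; rfl
    have h2 : xs.head? = some (vmap (L.head hLne)) := by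
      rw [hxsdef, List.head?_map, List.head?_eq_head hLne]; rfl
    rw [h1] at h2
    exact Option.some_injective _ h2
  have hxslast : (x₀ :: rest).getLast (List.cons_ne_nil x₀ rest) = vmap (L.getLast hLne) := by
    have h1 : xs.getLast? = some ((x₀ :: rest).getLast (List.cons_ne_nil x₀ rest)) := by
      rw [hxs]
      exact List.getLast?_eq_getLast _
    have h2 : xs.getLast? = some (vmap (L.getLast hLne)) := by
      rw [hxsdef, List.getLast?_map, List.getLast?_eq_getLast hLne]; rfl
    rw [h1] at h2
    exact Option.some_injective _ h2
  have hbase : u ∈ L.head hLne ∧ u ∈ L.getLast hLne :=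
    ⟨start_mem_head_edge c hLne, end_mem_getLast_edge c hLne⟩
  have hheadmem : L.head hLne ∈ L := List.head_mem hLne
  have hlastmem : L.getLast hLne ∈ L := List.getLast_mem hLne
  have hheadne : L.head hLne ≠ L.getLast hLne :=
    head_ne_getLast hLne hLnd (by omega)
  -- closing adjacency
  have hclose : G.Adj ((x₀ :: rest).getLast (List.cons_ne_nil x₀ rest)) x₀ := by
    rw [hxslast, hxshead]
    exact hadjv _ (hLsub _ hlastmem) _ (hLsub _ hheadmem) (Ne.symm hheadne) u hbase.2 hbase.1
  set Q := Walk.cons hclose q₀ with hQdef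
  have hQsupp : Q.support = (x₀ :: rest).getLast (List.cons_ne_nil x₀ rest) :: xs := by
    rw [hQdef, Walk.support_cons, hq₀, hxs]
  have hq₀len : q₀.length + 1 = xs.length := by
    have := q₀.length_support
    rw [hq₀] at this
    rw [hxs]
    omega
  have hq₀path : q₀.IsPath := by
    refine Walk.IsPath.mk' ?_
    rw [hq₀, ← hxs]
    exact hxsnd
  have hQcyc : Q.IsCycle := by
    rw [hQdef, Walk.cons_isCycle_iff]
    exact ⟨hq₀path, closing_not_mem q₀ hq₀path (by omega)⟩
  have hQlen : 4 ≤ Q.length := by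
    rw [hQdef, Walk.length_cons]
    omega
  have hQsuppmem : ∀ a, a ∈ Q.support → ∃ e ∈ L, vmap e = a := by
    intro a ha
    rw [hQsupp] at ha
    rcases List.mem_cons.1 ha with rfl | ha'
    · exact ⟨L.getLast hLne, hlastmem, hxslast.symm⟩
    · exact hxsmem a ha'
  have hxsQsupp : ∀ a ∈ xs, a ∈ Q.support := by
    intro a ha
    rw [hQsupp]
    exact List.mem_cons_of_mem _ ha
  -- Q is a hole
  have hQhole : IsHole G Q := by
    refine ⟨hQcyc, hQlen, ?_⟩
    intro a ha b hb hab
    obtain ⟨e, he, rfl⟩ := hQsuppmem a ha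
    obtain ⟨f, hf, rfl⟩ := hQsuppmem b hb
    obtain ⟨hef, w, hw1, hw2⟩ := hadjv' e (hLsub e he) f (hLsub f hf) hab
    have hQedges : Q.edges = s((x₀ :: rest).getLast (List.cons_ne_nil x₀ rest), x₀) :: q₀.edges := by
      rw [hQdef, Walk.edges_cons]
    have hconsec : ∀ g₁ g₂ : Sym2 W, AdjPair L g₁ g₂ → s(vmap g₁, vmap g₂) ∈ Q.edges := by
      intro g₁ g₂ hpair
      have : AdjPair Q.support (vmap g₁) (vmap g₂) := by
        rw [hQsupp, hxsdef]
        exact (hpair.map vmap).cons _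
      exact mem_edges_of_adjPair Q _ _ this
    rcases cycle_adjPair c hc e he f hf hef w hw1 hw2 with
      hp | hp | ⟨hne', hp⟩
    · exact hconsec e f hp
    · rw [Sym2.eq_swap]
      exact hconsec f e hp
    · rcases hp with ⟨he', hf'⟩ | ⟨hf', he'⟩
      · have h1 : vmap e = x₀ := by rw [hxshead]; exact congrArg vmap he'
        have h2 : vmap f = (x₀ :: rest).getLast (List.cons_ne_nil x₀ rest) := by
          rw [hxslast]; exact congrArg vmap hf'
        rw [h1, h2, Sym2.eq_swap]
        rw [hQdef, Walk.edges_cons]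
        exact List.mem_cons_self
      · have h1 : vmap f = x₀ := by rw [hxshead]; exact congrArg vmap hf'
        have h2 : vmap e = (x₀ :: rest).getLast (List.cons_ne_nil x₀ rest) := by
          rw [hxslast]; exact congrArg vmap he'
        rw [h1, h2]
        rw [hQdef, Walk.edges_cons]
        exact List.mem_cons_self
  -- the chord vertex is a wheel center
  have hchordE : s(x, y) ∈ R.edgeSet := hxy
  have hz : vmap s(x, y) ∉ Q.support := by
    intro hmem
    obtain ⟨e, he, heq⟩ := hQsuppmem _ hmem
    have : e = s(x, y) := by
      have := hvne e (hLsub e he) s(x, y) hchordE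
      by_contra hne
      exact this hne heq
    rw [this] at he
    exact hchord he
  obtain ⟨e₁, he₁, e₂, he₂, he12, hxe₁, hxe₂⟩ := cycle_two_edges c hc hx
  obtain ⟨f₁, hf₁, f₂, hf₂, hf12, hyf₁, hyf₂⟩ := cycle_two_edges c hc hy
  have hchordne : ∀ g ∈ L, s(x, y) ≠ g := by
    intro g hg heq
    rw [← heq] at hg
    exact hchord hg
  have hgne : ∀ g ∈ L, x ∈ g → ∀ g' ∈ L, y ∈ g' → g ≠ g' := by
    intro g hg hxg g' hg' hyg' heq
    rw [heq] at hxg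
    exact hchordne g' hg' (sym2_eq hxy.ne hxg hyg').symm
  have hadjz : ∀ g ∈ L, ∀ w', w' ∈ s(x, y) → w' ∈ g → G.Adj (vmap s(x, y)) (vmap g) :=
    fun g hg w' hw1 hw2 => hadjv _ hchordE _ (hLsub g hg) (hchordne g hg) w' hw1 hw2
  refine hW ⟨_, Q, vmap s(x, y), vmap e₁, vmap e₂, vmap f₁, hQhole, hz, ?_, ?_, ?_, ?_, ?_, ?_,
    ?_, ?_, ?_⟩
  · exact hxsQsupp _ (by rw [hxsdef]; exact List.mem_map_of_mem (f := vmap) he₁)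
  · exact hxsQsupp _ (by rw [hxsdef]; exact List.mem_map_of_mem (f := vmap) he₂)
  · exact hxsQsupp _ (by rw [hxsdef]; exact List.mem_map_of_mem (f := vmap) hf₁)
  · exact hvne _ (hLsub _ he₁) _ (hLsub _ he₂) he12
  · exact hvne _ (hLsub _ he₁) _ (hLsub _ hf₁) (hgne _ he₁ hxe₁ _ hf₁ hyf₁)
  · exact hvne _ (hLsub _ he₂) _ (hLsub _ hf₁) (hgne _ he₂ hxe₂ _ hf₁ hyf₁)
  · exact hadjz _ he₁ x (by simp) hxe₁
  · exact hadjz _ he₂ x (by simp) hxe₂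
  · exact hadjz _ hf₁ y (by simp) hyf₁

end Abstract

section Krausz

variable [Fintype V] (G : SimpleGraph V)

theorem krausz (hDiamond : ¬ ContainsDiamond G) (hClaw : ¬ ContainsClaw G) :
    ∃ (R : SimpleGraph (Finset V ⊕ V)) (emap : V → Sym2 (Finset V ⊕ V)),
      (∀ v, emap v ∈ R.edgeSet) ∧ Function.Injective emap ∧
      (∀ e ∈ R.edgeSet, ∃ v, emap v = e) ∧
      (∀ u v : V, G.Adj u v ↔ u ≠ v ∧ ∃ w, w ∈ emap u ∧ w ∈ emap v) ∧
      (∀ u v w : V, G.Adj u v → G.Adj u w → G.Adj v w →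
        ∃ ω, ω ∈ emap u ∧ ω ∈ emap v ∧ ω ∈ emap w) := by
  classical
  set P : Finset V → Prop := fun K => G.IsClique (K : Set V) with hP
  -- every vertex lies in a maximal clique
  have hPmax : ∀ v : V, ∃ K, Maximal P K ∧ v ∈ K := by
    intro v
    have h1 : P {v} := by
      intro a ha b hb hab
      simp only [Finset.coe_singleton, Set.mem_singleton_iff] at ha hb
      exact absurd (ha.trans hb.symm) hab
    obtain ⟨K, hK1, hK2⟩ := Finite.exists_le_maximal h1
    exact ⟨K, hK2, hK1 (Finset.mem_singleton_self v)⟩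
  -- two distinct maximal cliques meet in at most one vertex
  have hinter : ∀ K₁ K₂ : Finset V, Maximal P K₁ → Maximal P K₂ → K₁ ≠ K₂ →
      ∀ a b, a ∈ K₁ → a ∈ K₂ → b ∈ K₁ → b ∈ K₂ → a = b := by
    intro K₁ K₂ h1 h2 hne a b ha1 ha2 hb1 hb2
    by_contra hab
    have hns : ¬ K₁ ⊆ K₂ := by
      intro hsub
      exact hne (le_antisymm hsub (h1.2 h2.1 hsub))
    obtain ⟨x, hx1, hx2⟩ := Finset.not_subset.1 hns
    have hnc : ¬ P (insert x K₂) := by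
      intro hcl
      exact hx2 (h2.2 hcl (Finset.subset_insert x K₂) (Finset.mem_insert_self x K₂))
    simp only [hP] at hnc
    simp only [Finset.coe_insert] at hnc
    rw [G.isClique_insert] at hnc
    push_neg at hnc
    obtain ⟨y, hy2, hxy, hnadj⟩ := hnc h2.1
    rw [Finset.mem_coe] at hy2
    have hy1 : y ∉ K₁ := by
      intro hy1
      exact hnadj (h1.1 (Finset.mem_coe.2 hx1) (Finset.mem_coe.2 hy1) hxy)
    refine hDiamond ⟨x, y, a, b, hxy, ?_, ?_, ?_, ?_, hab, hnadj, ?_, ?_, ?_, ?_, ?_⟩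
    · intro h; rw [h] at hx2; exact hx2 ha2
    · intro h; rw [h] at hx2; exact hx2 hb2
    · intro h; rw [h] at hy1; exact hy1 ha1
    · intro h; rw [h] at hy1; exact hy1 hb1
    · exact h1.1 (Finset.mem_coe.2 hx1) (Finset.mem_coe.2 ha1) (fun h => hx2 (h ▸ ha2))
    · exact h1.1 (Finset.mem_coe.2 hx1) (Finset.mem_coe.2 hb1) (fun h => hx2 (h ▸ hb2))
    · exact h2.1 (Finset.mem_coe.2 hy2) (Finset.mem_coe.2 ha2) (fun h => hy1 (h ▸ ha1))
    · exact h2.1 (Finset.mem_coe.2 hy2) (Finset.mem_coe.2 hb2) (fun h => hy1 (h ▸ hb1))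
    · exact h1.1 (Finset.mem_coe.2 ha1) (Finset.mem_coe.2 hb1) hab
  -- no vertex lies in three distinct maximal cliques
  have hthree : ∀ K₁ K₂ K₃ : Finset V, Maximal P K₁ → Maximal P K₂ → Maximal P K₃ →
      ∀ v, v ∈ K₁ → v ∈ K₂ → v ∈ K₃ → (K₁ = K₂ ∨ K₁ = K₃ ∨ K₂ = K₃) := by
    intro K₁ K₂ K₃ h1 h2 h3m v hv1 hv2 hv3
    by_contra hcon
    push_neg at hcon
    obtain ⟨h12, h13, h23⟩ := hcon
    have hpick : ∀ Ka Kb : Finset V, Maximal P Ka → Maximal P Kb → Ka ≠ Kb → v ∈ Kb →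
        ∃ x ∈ Ka, x ≠ v := by
      intro Ka Kb ha hb hne hvb
      by_contra hno
      push_neg at hno
      have hsub : Ka ⊆ Kb := by
        intro z hz
        rw [hno z hz]
        exact hvb
      exact hne (le_antisymm hsub (ha.2 hb.1 hsub))
    obtain ⟨x₁, hx₁, hx₁v⟩ := hpick K₁ K₂ h1 h2 h12 hv2
    obtain ⟨x₂, hx₂, hx₂v⟩ := hpick K₂ K₁ h2 h1 (Ne.symm h12) hv1
    obtain ⟨x₃, hx₃, hx₃v⟩ := hpick K₃ K₁ h3m h1 (Ne.symm h13) hv1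
    -- the xᵢ are pairwise distinct
    have hdist : ∀ (Ka Kb : Finset V), Maximal P Ka → Maximal P Kb → Ka ≠ Kb →
        ∀ a, a ∈ Ka → a ∈ Kb → a ≠ v → v ∈ Ka → v ∈ Kb → False := by
      intro Ka Kb ha hb hne a haa hab hav hva hvb
      exact hav (hinter Ka Kb ha hb hne a v haa hab hva hvb)
    have h12' : x₁ ≠ x₂ := by
      intro h
      exact hdist K₁ K₂ h1 h2 h12 x₁ hx₁ (h ▸ hx₂) hx₁v hv1 hv2
    have h13' : x₁ ≠ x₃ := by
      intro h
      exact hdist K₁ K₃ h1 h3m h13 x₁ hx₁ (h ▸ hx₃) hx₁v hv1 hv3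
    have h23' : x₂ ≠ x₃ := by
      intro h
      exact hdist K₂ K₃ h2 h3m h23 x₂ hx₂ (h ▸ hx₃) hx₂v hv2 hv3
    -- the xᵢ are pairwise non-adjacent
    have hnadj : ∀ (Ka Kb : Finset V), Maximal P Ka → Maximal P Kb → Ka ≠ Kb →
        ∀ a b, a ∈ Ka → b ∈ Kb → a ≠ v → b ≠ v → v ∈ Ka → v ∈ Kb → ¬ G.Adj a b := by
      intro Ka Kb ha hb hne a b haa hbb hav hbv hva hvb hadj
      have hclq : P {v, a, b} := by
        intro z hz z' hz' hzz'
        simp only [Finset.coe_insert, Finset.coe_singleton, Set.mem_insert_iff,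
          Set.mem_singleton_iff] at hz hz'
        have hva' : G.Adj v a := ha.1 (Finset.mem_coe.2 hva) (Finset.mem_coe.2 haa) (Ne.symm hav)
        have hvb' : G.Adj v b := hb.1 (Finset.mem_coe.2 hvb) (Finset.mem_coe.2 hbb) (Ne.symm hbv)
        rcases hz with rfl | rfl | rfl <;> rcases hz' with rfl | rfl | rfl
        · exact absurd rfl hzz'
        · exact hva'
        · exact hvb'
        · exact hva'.symm
        · exact absurd rfl hzz'
        · exact hadj
        · exact hvb'.symm
        · exact hadj.symm
        · exact absurd rfl hzz'
      obtain ⟨M, hM1, hM2⟩ := Finite.exists_le_maximal hclq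
      have hvM : v ∈ M := hM1 (by simp)
      have haM : a ∈ M := hM1 (by simp)
      have hbM : b ∈ M := hM1 (by simp)
      have hKaM : Ka = M := by
        by_contra hne'
        exact hav (hinter Ka M ha hM2 hne' a v haa haM hva hvM)
      have hKbM : Kb = M := by
        by_contra hne'
        exact hbv (hinter Kb M hb hM2 hne' b v hbb hbM hvb hvM)
      exact hne (hKaM.trans hKbM.symm)
    refine hClaw ⟨v, x₁, x₂, x₃, h12', h13', h23', ?_, ?_, ?_, ?_, ?_, ?_⟩
    · exact h1.1 (Finset.mem_coe.2 hv1) (Finset.mem_coe.2 hx₁) (Ne.symm hx₁v)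
    · exact h2.1 (Finset.mem_coe.2 hv2) (Finset.mem_coe.2 hx₂) (Ne.symm hx₂v)
    · exact h3m.1 (Finset.mem_coe.2 hv3) (Finset.mem_coe.2 hx₃) (Ne.symm hx₃v)
    · exact hnadj K₁ K₂ h1 h2 h12 x₁ x₂ hx₁ hx₂ hx₁v hx₂v hv1 hv2
    · exact hnadj K₁ K₃ h1 h3m h13 x₁ x₃ hx₁ hx₃ hx₁v hx₃v hv1 hv3
    · exact hnadj K₂ K₃ h2 h3m h23 x₂ x₃ hx₂ hx₃ hx₂v hx₃v hv2 hv3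
  -- choose the cliques
  choose K1 hK1max hK1mem using hPmax
  set HasTwo : V → Prop := fun v => ∃ K, Maximal P K ∧ v ∈ K ∧ K ≠ K1 v with hHT
  have hK2ex : ∀ v, ∃ K : Finset V, HasTwo v → (Maximal P K ∧ v ∈ K ∧ K ≠ K1 v) := by
    intro v
    by_cases h : HasTwo v
    · obtain ⟨K, hK⟩ := h
      exact ⟨K, fun _ => hK⟩
    · exact ⟨∅, fun h' => absurd h' h⟩
  choose K2 hK2spec using hK2ex
  set emap : V → Sym2 (Finset V ⊕ V) := fun v =>
    if HasTwo v then s(Sum.inl (K1 v), Sum.inl (K2 v)) else s(Sum.inl (K1 v), Sum.inr v)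
    with hemap
  set R : SimpleGraph (Finset V ⊕ V) :=
    { Adj := fun a b => a ≠ b ∧ ∃ v, a ∈ emap v ∧ b ∈ emap v
      symm := by
        refine ⟨?_⟩
        rintro a b ⟨hab, v, ha, hb⟩
        exact ⟨Ne.symm hab, v, hb, ha⟩
      loopless := ⟨fun a h => h.1 rfl⟩ } with hR
  -- membership facts
  have f3 : ∀ (v : V) (K : Finset V), Sum.inl K ∈ emap v → Maximal P K ∧ v ∈ K := by
    intro v K h
    simp only [hemap] at h
    by_cases h2 : HasTwo v
    · simp only [if_pos h2, Sym2.mem_iff] at h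
      rcases h with h | h
      · rw [Sum.inl.injEq] at h
        subst h
        exact ⟨hK1max v, hK1mem v⟩
      · rw [Sum.inl.injEq] at h
        subst h
        exact ⟨(hK2spec v h2).1, (hK2spec v h2).2.1⟩
    · simp only [if_neg h2, Sym2.mem_iff] at h
      rcases h with h | h
      · rw [Sum.inl.injEq] at h
        subst h
        exact ⟨hK1max v, hK1mem v⟩
      · exact absurd h (by simp)
  have f3' : ∀ (v u' : V), Sum.inr u' ∈ emap v → u' = v := by
    intro v u' h
    simp only [hemap] at h
    by_cases h2 : HasTwo v
    · simp only [if_pos h2, Sym2.mem_iff] at h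
      rcases h with h | h <;> exact absurd h (by simp)
    · simp only [if_neg h2, Sym2.mem_iff] at h
      rcases h with h | h
      · exact absurd h (by simp)
      · rw [Sum.inr.injEq] at h
        exact h
  have f4 : ∀ (v : V) (K : Finset V), Maximal P K → v ∈ K → Sum.inl K ∈ emap v := by
    intro v K hK hv
    simp only [hemap]
    by_cases hkk : K = K1 v
    · subst hkk
      by_cases h2 : HasTwo v
      · simp only [if_pos h2]; simp
      · simp only [if_neg h2]; simp
    · have h2 : HasTwo v := ⟨K, hK, hv, hkk⟩
      have spec := hK2spec v h2
      have hKK2 : K = K2 v := by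
        rcases hthree (K1 v) K (K2 v) (hK1max v) hK spec.1 v (hK1mem v) hv spec.2.1 with
          h | h | h
        · exact absurd h.symm hkk
        · exact absurd h.symm spec.2.2
        · exact h
      simp only [if_pos h2, hKK2]
      simp
  have f1 : ∀ v, emap v ∈ R.edgeSet := by
    intro v
    simp only [hemap]
    by_cases h2 : HasTwo v
    · simp only [if_pos h2]
      rw [mem_edgeSet, hR]
      refine ⟨?_, v, ?_, ?_⟩
      · rw [Ne, Sum.inl.injEq]
        exact fun h => (hK2spec v h2).2.2 h.symm
      · simp only [hemap, if_pos h2]; simp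
      · simp only [hemap, if_pos h2]; simp
    · simp only [if_neg h2]
      rw [mem_edgeSet, hR]
      refine ⟨by simp, v, ?_, ?_⟩
      · simp only [hemap, if_neg h2]; simp
      · simp only [hemap, if_neg h2]; simp
  have f2 : Function.Injective emap := by
    intro a b h
    by_cases h2a : HasTwo a
    · by_cases h2b : HasTwo b
      · -- both have two cliques
        have hea : emap a = s(Sum.inl (K1 a), Sum.inl (K2 a)) := by
          simp only [hemap, if_pos h2a]
        have ha1 : Sum.inl (K1 a) ∈ emap b := by rw [← h, hea]; simp
        have ha2 : Sum.inl (K2 a) ∈ emap b := by rw [← h, hea]; simp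
        have hb1 := (f3 b (K1 a) ha1).2
        have hb2 := (f3 b (K2 a) ha2).2
        exact (hinter (K1 a) (K2 a) (hK1max a) (hK2spec a h2a).1
          (fun hh => (hK2spec a h2a).2.2 hh.symm) a b (hK1mem a) (hK2spec a h2a).2.1 hb1 hb2)
      · have heb : emap b = s(Sum.inl (K1 b), Sum.inr b) := by
          simp only [hemap, if_neg h2b]
        have : Sum.inr b ∈ emap a := by rw [h, heb]; simp
        exact (f3' a b this).symm
    · have hea : emap a = s(Sum.inl (K1 a), Sum.inr a) := by
        simp only [hemap, if_neg h2a]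
      have : Sum.inr a ∈ emap b := by rw [← h, hea]; simp
      exact f3' b a this
  have f4' : ∀ u v : V, G.Adj u v → ∃ K : Finset V, Maximal P K ∧ u ∈ K ∧ v ∈ K := by
    intro u v h
    have hclq : P {u, v} := by
      intro z hz z' hz' hzz'
      simp only [Finset.coe_insert, Finset.coe_singleton, Set.mem_insert_iff,
        Set.mem_singleton_iff] at hz hz'
      rcases hz with rfl | rfl <;> rcases hz' with rfl | rfl
      · exact absurd rfl hzz'
      · exact h
      · exact h.symm
      · exact absurd rfl hzz'
    obtain ⟨M, hM1, hM2⟩ := Finite.exists_le_maximal hclq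
    exact ⟨M, hM2, hM1 (by simp), hM1 (by simp)⟩
  have h4 : ∀ u v : V, G.Adj u v ↔ u ≠ v ∧ ∃ w, w ∈ emap u ∧ w ∈ emap v := by
    intro u v
    constructor
    · intro h
      obtain ⟨M, hM, huM, hvM⟩ := f4' u v h
      exact ⟨h.ne, Sum.inl M, f4 u M hM huM, f4 v M hM hvM⟩
    · rintro ⟨hne, w, hwu, hwv⟩
      cases w with
      | inl K =>
        have hu := f3 u K hwu
        have hv := f3 v K hwv
        exact hu.1.1 (Finset.mem_coe.2 hu.2) (Finset.mem_coe.2 hv.2) hne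
      | inr p =>
        exact absurd ((f3' u p hwu).symm.trans (f3' v p hwv)) hne
  have h5 : ∀ u v w : V, G.Adj u v → G.Adj u w → G.Adj v w →
      ∃ ω, ω ∈ emap u ∧ ω ∈ emap v ∧ ω ∈ emap w := by
    intro u v w huv huw hvw
    have hclq : P {u, v, w} := by
      intro z hz z' hz' hzz'
      simp only [Finset.coe_insert, Finset.coe_singleton, Set.mem_insert_iff,
        Set.mem_singleton_iff] at hz hz'
      rcases hz with rfl | rfl | rfl <;> rcases hz' with rfl | rfl | rfl
      · exact absurd rfl hzz'
      · exact huv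
      · exact huw
      · exact huv.symm
      · exact absurd rfl hzz'
      · exact hvw
      · exact huw.symm
      · exact hvw.symm
      · exact absurd rfl hzz'
    obtain ⟨M, hM1, hM2⟩ := Finite.exists_le_maximal hclq
    exact ⟨Sum.inl M, f4 u M hM2 (hM1 (by simp)), f4 v M hM2 (hM1 (by simp)),
      f4 w M hM2 (hM1 (by simp))⟩
  have f5 : ∀ e ∈ R.edgeSet, ∃ v, emap v = e := by
    intro e he
    induction e with
    | _ a b =>
      rw [mem_edgeSet, hR] at he
      obtain ⟨hne, v, ha, hb⟩ := he
      exact ⟨v, sym2_eq hne ha hb⟩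
  exact ⟨R, emap, f1, f2, f5, h4, h5⟩

end Krausz

end Stmt16Aux

/-- Every (wheel, diamond, claw)-free graph is isomorphic to the line graph L(R) of
some triangle-free chordless graph R. -/
theorem stmt16 {V : Type u} [Fintype V] (G : SimpleGraph V)
    (hWheel : ¬ ContainsWheel G) (hDiamond : ¬ ContainsDiamond G)
    (hClaw : ¬ ContainsClaw G) :
    ∃ (W : Type u) (R : SimpleGraph W), Finite W ∧ R.CliqueFree 3 ∧
      ChordlessGraph R ∧ Nonempty (G ≃g R.lineGraph) := by
  classical
  obtain ⟨R, emap, f1, f2, f5, h4, h5⟩ := Stmt16Aux.krausz G hDiamond hClaw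
  refine ⟨Finset V ⊕ V, R, inferInstance, Stmt16Aux.abstract_triangle_free emap f5 h4 h5,
    Stmt16Aux.abstract_chordless emap f2 f5 h4 h5 hWheel, ⟨?_⟩⟩
  have hbij : Function.Bijective (fun v => (⟨emap v, f1 v⟩ : R.edgeSet)) := by
    constructor
    · intro a b h
      exact f2 (congrArg Subtype.val h)
    · rintro ⟨e, he⟩
      obtain ⟨v, hv⟩ := f5 e he
      exact ⟨v, Subtype.ext hv⟩
  exact
    { toEquiv := Equiv.ofBijective _ hbij
      map_rel_iff' := by
        intro a b
        show R.lineGraph.Adj ⟨emap a, f1 a⟩ ⟨emap b, f1 b⟩ ↔ G.Adj a b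
        rw [lineGraph_adj_iff_exists, h4 a b]
        constructor
        · rintro ⟨hne, w, hw1, hw2⟩
          exact ⟨fun hab => hne (by rw [hab]), w, hw1, hw2⟩
        · rintro ⟨hne, w, hw1, hw2⟩
          exact ⟨fun hh => hne (f2 (congrArg Subtype.val hh)), w, hw1, hw2⟩ }
end
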